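/- The series ∑_{n=0}^∞ (2n)! / (2^{2n} (2n+1) (n!)^2) converges and its sum equals π/2. -/

import Mathlib

open Real Filter

noncomputable def myc (n : ℕ) : ℝ := n.centralBinom / 4 ^ n

noncomputable def mya (n : ℕ) : ℝ := myc n / (2 * n + 1)

lemma myc_nonneg (n : ℕ) : 0 ≤ myc n := by
  unfold myc; positivity

lemma myc_rec (n : ℕ) : ((n : ℝ) + 1) * myc (n + 1) = ((n : ℝ) + 1 / 2) * myc n := by
  have h := Nat.succ_mul_centralBinom_succ n
  have h' : ((n + 1) * Nat.centralBinom (n + 1) : ℝ) = (2 * (2 * n + 1) * Nat.centralBinom n : ℝ) := by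
    exact_mod_cast congrArg (Nat.cast : ℕ → ℝ) h
  unfold myc
  push_cast at h' ⊢
  field_simp
  rw [pow_succ]
  linear_combination (2 * (4:ℝ) ^ n) * h'

lemma myc_zero : myc 0 = 1 := by simp [myc, Nat.centralBinom]

lemma myc_le_one (n : ℕ) : myc n ≤ 1 := by
  induction n with
  | zero => simp [myc_zero]
  | succ n ih =>
    have h := myc_rec n
    have hn : (0:ℝ) < (n:ℝ) + 1 := by positivity
    nlinarith [myc_nonneg n, myc_nonneg (n+1)]

lemma myc_sq (n : ℕ) : (2 * (n:ℝ) + 1) * myc n ^ 2 ≤ 1 := by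
  induction n with
  | zero => simp [myc_zero]
  | succ n ih =>
    have h := myc_rec n
    have hn : (0:ℝ) < (n:ℝ) + 1 := by positivity
    have h2 : ((n:ℝ)+1)^2 * myc (n+1)^2 = ((n:ℝ)+1/2)^2 * myc n ^2 := by
      have h3 := congrArg (fun z : ℝ => z ^ 2) h
      simpa [mul_pow] using h3
    push_cast
    nlinarith [h2, ih, sq_nonneg (myc n), sq_nonneg (myc (n+1)), sq_nonneg ((n:ℝ)+1)]

lemma mya_nonneg (n : ℕ) : 0 ≤ mya n :=
  div_nonneg (myc_nonneg n) (by positivity)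

lemma mya_le (n : ℕ) (h : 1 ≤ n) : mya n ≤ (((n:ℝ)) ^ (3/2 : ℝ))⁻¹ := by
  have hn : (0:ℝ) < n := by exact_mod_cast h
  have hrs : ((n:ℝ)) ^ (3/2 : ℝ) = n * Real.sqrt n := by
    rw [show (3/2:ℝ) = 1 + 1/2 by norm_num, Real.rpow_add hn, Real.rpow_one,
      ← Real.sqrt_eq_rpow]
  rw [hrs]
  have hsq : myc n ^ 2 ≤ ((n:ℝ))⁻¹ := by
    have h1 : (2 * (n:ℝ) + 1) * myc n ^ 2 ≤ 1 := myc_sq n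
    rw [inv_eq_one_div, le_div_iff₀ hn]
    nlinarith [sq_nonneg (myc n)]
  have hc : myc n ≤ (Real.sqrt n)⁻¹ := by
    rw [← Real.sqrt_inv]
    exact (Real.le_sqrt (myc_nonneg n) (by positivity)).mpr hsq
  have h2 : mya n = myc n / (2 * n + 1) := rfl
  rw [h2]
  calc myc n / (2 * (n:ℝ) + 1) ≤ (Real.sqrt n)⁻¹ / (n:ℝ) := by
        apply div_le_div₀ (by positivity) hc hn (by linarith)
    _ = ((n:ℝ) * Real.sqrt n)⁻¹ := by
        rw [div_eq_mul_inv, ← mul_inv, mul_comm]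

lemma mya_summable : Summable mya := by
  rw [← summable_nat_add_iff 1]
  have S : Summable (fun n : ℕ => (((n:ℝ)) ^ (3/2 : ℝ))⁻¹) := by
    simpa [one_div] using Real.summable_one_div_nat_rpow.mpr (by norm_num : (1:ℝ) < 3/2)
  have S' : Summable (fun n : ℕ => ((((n:ℕ)+1:ℝ)) ^ (3/2 : ℝ))⁻¹) := by
    have := (summable_nat_add_iff 1).mpr S
    simpa using this
  apply Summable.of_nonneg_of_le (fun n => mya_nonneg _) _ S'
  intro n
  have := mya_le (n+1) (by omega)
  simpa using this


noncomputable def myf (x : ℝ) : ℝ := ∑' n, myc n * x ^ n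
noncomputable def myH (t : ℝ) : ℝ := ∑' n, mya n * t ^ (2 * n + 1)


lemma mya_mul (n : ℕ) : mya n * (2 * (n:ℝ) + 1) = myc n := by
  unfold mya
  field_simp

lemma summable_geom_bound {x r : ℝ} (hx : |x| ≤ r) (hr : r < 1)
    {g : ℕ → ℝ} (hg : ∀ n, |g n| ≤ 1) : Summable (fun n => g n * x ^ n) := by
  have hr0 : 0 ≤ r := le_trans (abs_nonneg x) hx
  apply Summable.of_norm_bounded (summable_geometric_of_lt_one hr0 hr)
  intro n
  rw [Real.norm_eq_abs, abs_mul, abs_pow]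
  calc |g n| * |x| ^ n ≤ 1 * r ^ n :=
        mul_le_mul (hg n) (pow_le_pow_left₀ (abs_nonneg x) hx n) (by positivity) zero_le_one
    _ = r ^ n := one_mul _

lemma abs_myc_le_one (n : ℕ) : |myc n| ≤ 1 := by
  rw [abs_of_nonneg (myc_nonneg n)]; exact myc_le_one n

lemma summable_deriv_bound {r : ℝ} (hr0 : 0 < r) (hr : r < 1) :
    Summable (fun n : ℕ => (n : ℝ) * r ^ (n - 1)) := by
  have h : Summable (fun n : ℕ => r⁻¹ * ((n:ℝ) ^ 1 * r ^ n)) :=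
    (summable_pow_mul_geometric_of_norm_lt_one (R := ℝ) 1
      (by rw [Real.norm_eq_abs, abs_of_pos hr0]; exact hr)).mul_left _
  apply h.congr
  intro n
  cases n with
  | zero => simp
  | succ m =>
    rw [pow_one, Nat.add_sub_cancel, pow_succ]
    field_simp

lemma hasDerivAt_myf {x : ℝ} (hx : x ∈ Set.Ioo (-1:ℝ) 1) :
    HasDerivAt myf (∑' n, myc n * ((n:ℝ) * x ^ (n - 1))) x := by
  obtain ⟨hx1, hx2⟩ := hx
  set r : ℝ := (|x| + 1) / 2 with hr
  have hx' : |x| < 1 := abs_lt.mpr ⟨hx1, hx2⟩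
  have hxr : |x| < r := by rw [hr]; linarith
  have hr1 : r < 1 := by rw [hr]; linarith [abs_nonneg x]
  have hr0 : 0 < r := by rw [hr]; positivity
  have hrIoo : IsOpen (Set.Ioo (-r) r) := isOpen_Ioo
  apply hasDerivAt_tsum_of_isPreconnected (u := fun n : ℕ => (n:ℝ) * r ^ (n - 1))
      (summable_deriv_bound hr0 hr1) hrIoo (convex_Ioo _ _).isPreconnected
      (fun n y _ => (hasDerivAt_pow n y).const_mul (myc n))
      ?_ (Set.mem_Ioo.mpr ⟨by linarith [neg_abs_le x], (abs_lt.mp hxr).2⟩)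
      (summable_geom_bound hxr.le hr1 abs_myc_le_one)
      (Set.mem_Ioo.mpr ⟨by linarith [neg_abs_le x], (abs_lt.mp hxr).2⟩)
  intro n y hy
  have hy' : |y| ≤ r := (abs_lt.mpr ⟨hy.1, hy.2⟩).le
  rw [Real.norm_eq_abs, abs_mul, abs_mul, abs_pow, abs_of_nonneg (myc_nonneg n),
    Nat.abs_cast]
  calc myc n * ((n:ℝ) * |y| ^ (n - 1)) ≤ 1 * ((n:ℝ) * r ^ (n - 1)) := by
        apply mul_le_mul (myc_le_one n) _ (by positivity) zero_le_one
        exact mul_le_mul_of_nonneg_left (pow_le_pow_left₀ (abs_nonneg y) hy' _) (Nat.cast_nonneg n)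
    _ = (n:ℝ) * r ^ (n - 1) := one_mul _


lemma summable_myc_deriv {x : ℝ} (hx1 : -1 < x) (hx2 : x < 1) :
    Summable (fun n : ℕ => myc n * ((n:ℝ) * x ^ (n - 1))) := by
  have hx' : |x| < 1 := abs_lt.mpr ⟨hx1, hx2⟩
  set r : ℝ := (|x| + 1) / 2 with hr
  have hxr : |x| < r := by rw [hr]; linarith
  have hr1 : r < 1 := by rw [hr]; linarith [abs_nonneg x]
  have hr0 : 0 < r := by rw [hr]; positivity
  apply Summable.of_norm_bounded (summable_deriv_bound hr0 hr1)
  intro n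
  rw [Real.norm_eq_abs, abs_mul, abs_mul, abs_pow, abs_of_nonneg (myc_nonneg n),
    Nat.abs_cast]
  calc myc n * ((n:ℝ) * |x| ^ (n - 1)) ≤ 1 * ((n:ℝ) * r ^ (n - 1)) := by
        apply mul_le_mul (myc_le_one n) _ (by positivity) zero_le_one
        exact mul_le_mul_of_nonneg_left (pow_le_pow_left₀ (abs_nonneg x) hxr.le _) (Nat.cast_nonneg n)
    _ = (n:ℝ) * r ^ (n - 1) := one_mul _

lemma myD_eq {x : ℝ} (hx : x ∈ Set.Ioo (-1:ℝ) 1) :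
    (1 - x) * (∑' n, myc n * ((n:ℝ) * x ^ (n - 1))) = myf x / 2 := by
  obtain ⟨hx1, hx2⟩ := hx
  have hx' : |x| < 1 := abs_lt.mpr ⟨hx1, hx2⟩
  have S1 : Summable (fun n : ℕ => myc n * ((n:ℝ) * x ^ (n - 1))) := summable_myc_deriv hx1 hx2
  have SA : Summable (fun n : ℕ => ((n:ℝ) + 1) * myc (n + 1) * x ^ n) := by
    have := (summable_nat_add_iff 1).mpr S1
    apply this.congr
    intro n
    simp only [Nat.add_sub_cancel]
    push_cast
    ring
  have SB : Summable (fun n : ℕ => (n:ℝ) * myc n * x ^ n) := by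
    have := S1.mul_left x
    apply this.congr
    intro n
    cases n with
    | zero => simp
    | succ m =>
      simp only [Nat.add_sub_cancel]
      push_cast
      rw [pow_succ]
      ring
  have hA : (∑' n, myc n * ((n:ℝ) * x ^ (n - 1)))
      = ∑' n : ℕ, ((n:ℝ) + 1) * myc (n + 1) * x ^ n := by
    rw [Summable.tsum_eq_zero_add S1]
    simp only [Nat.cast_zero, zero_mul, mul_zero, zero_add, Nat.add_sub_cancel]
    apply tsum_congr
    intro n
    push_cast
    ring
  have hB : x * (∑' n, myc n * ((n:ℝ) * x ^ (n - 1)))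
      = ∑' n : ℕ, (n:ℝ) * myc n * x ^ n := by
    rw [← tsum_mul_left]
    apply tsum_congr
    intro n
    cases n with
    | zero => simp
    | succ m =>
      simp only [Nat.add_sub_cancel]
      push_cast
      rw [pow_succ]
      ring
  have key : (∑' n : ℕ, ((n:ℝ) + 1) * myc (n + 1) * x ^ n) - (∑' n : ℕ, (n:ℝ) * myc n * x ^ n)
      = myf x / 2 := by
    rw [← Summable.tsum_sub SA SB]
    unfold myf
    rw [show (∑' n, myc n * x ^ n) / 2 = ∑' n, (myc n * x ^ n) / 2 by
      rw [tsum_div_const]]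
    apply tsum_congr
    intro n
    have := myc_rec n
    linear_combination x ^ n * this
  calc (1 - x) * (∑' n, myc n * ((n:ℝ) * x ^ (n - 1)))
      = (∑' n, myc n * ((n:ℝ) * x ^ (n - 1))) - x * (∑' n, myc n * ((n:ℝ) * x ^ (n - 1))) := by ring
    _ = myf x / 2 := by rw [hB, hA, key]

lemma myf_zero : myf 0 = 1 := by
  unfold myf
  rw [tsum_eq_single 0 (by intro n hn; simp [zero_pow hn])]
  simp [myc_zero]

lemma myf_eq {x : ℝ} (h0 : 0 ≤ x) (h1 : x < 1) : myf x * Real.sqrt (1 - x) = 1 := by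
  have key : ∀ y ∈ Set.Icc (0:ℝ) x, myf y * Real.sqrt (1 - y) = myf 0 * Real.sqrt (1 - 0) := by
    apply constant_of_has_deriv_right_zero
    · intro y hy
      have hy' : y ∈ Set.Ioo (-1:ℝ) 1 := ⟨by linarith [hy.1], by linarith [hy.2]⟩
      have hd := hasDerivAt_myf hy'
      have hs : (0:ℝ) < Real.sqrt (1 - y) := Real.sqrt_pos.mpr (by linarith [hy'.2])
      have hd2 : HasDerivAt (fun y => Real.sqrt (1 - y)) (-(1 / (2 * Real.sqrt (1 - y)))) y := by
        have := (Real.hasDerivAt_sqrt (show (1:ℝ) - y ≠ 0 by linarith [hy'.2])).comp y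
          ((hasDerivAt_const y (1:ℝ)).sub (hasDerivAt_id y))
        simpa [Function.comp_def] using this
      exact ((hd.mul hd2).continuousAt).continuousWithinAt
    · intro y hy
      have hy' : y ∈ Set.Ioo (-1:ℝ) 1 := ⟨by linarith [hy.1], by linarith [hy.2]⟩
      have hd := hasDerivAt_myf hy'
      have hs : (0:ℝ) < Real.sqrt (1 - y) := Real.sqrt_pos.mpr (by linarith [hy'.2])
      have hss : Real.sqrt (1 - y) ^ 2 = 1 - y := Real.sq_sqrt (by linarith [hy'.2])
      have hd2 : HasDerivAt (fun y => Real.sqrt (1 - y)) (-(1 / (2 * Real.sqrt (1 - y)))) y := by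
        have := (Real.hasDerivAt_sqrt (show (1:ℝ) - y ≠ 0 by linarith [hy'.2])).comp y
          ((hasDerivAt_const y (1:ℝ)).sub (hasDerivAt_id y))
        simpa [Function.comp_def] using this
      have hmul := hd.mul hd2
      have hzero : (∑' n, myc n * ((n:ℝ) * y ^ (n - 1))) * Real.sqrt (1 - y)
          + myf y * -(1 / (2 * Real.sqrt (1 - y))) = 0 := by
        have hkey := myD_eq hy'
        generalize (∑' n, myc n * ((n:ℝ) * y ^ (n - 1))) = A at hkey ⊢
        rw [show myf y = 2 * Real.sqrt (1 - y) ^ 2 * A by rw [hss]; linarith]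
        field_simp
        ring
      rw [← hzero]
      exact hmul.hasDerivWithinAt
  have := key x ⟨h0, le_refl x⟩
  rw [this]
  simp [myf_zero]

lemma abs_mya_le_one (n : ℕ) : |mya n| ≤ 1 := by
  unfold mya
  rw [abs_of_nonneg (div_nonneg (myc_nonneg n) (by positivity))]
  rw [div_le_one (by positivity)]
  calc myc n ≤ 1 := myc_le_one n
    _ ≤ 2 * (n:ℝ) + 1 := by have : (0:ℝ) ≤ (n:ℝ) := Nat.cast_nonneg n; linarith

lemma hasDerivAt_myH {t : ℝ} (ht : t ∈ Set.Ioo (-1:ℝ) 1) :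
    HasDerivAt myH (∑' n, myc n * t ^ (2 * n)) t := by
  obtain ⟨ht1, ht2⟩ := ht
  have ht' : |t| < 1 := abs_lt.mpr ⟨ht1, ht2⟩
  set r : ℝ := (|t| + 1) / 2 with hr
  have htr : |t| < r := by rw [hr]; linarith
  have hr1 : r < 1 := by rw [hr]; linarith [abs_nonneg t]
  have hr0 : 0 < r := by rw [hr]; positivity
  have hmem : t ∈ Set.Ioo (-r) r := ⟨by linarith [neg_abs_le t], (abs_lt.mp htr).2⟩
  have hderiv : ∀ (n : ℕ) (y : ℝ), y ∈ Set.Ioo (-r) r →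
      HasDerivAt (fun y => mya n * y ^ (2 * n + 1)) (myc n * y ^ (2 * n)) y := by
    intro n y _
    have := (hasDerivAt_pow (2 * n + 1) y).const_mul (mya n)
    refine this.congr_deriv ?_
    simp only [Nat.add_sub_cancel]
    push_cast
    rw [← mya_mul n]
    ring
  apply hasDerivAt_tsum_of_isPreconnected (u := fun n : ℕ => (r ^ 2) ^ n)
      (summable_geometric_of_lt_one (by positivity) (by nlinarith)) isOpen_Ioo
      (convex_Ioo _ _).isPreconnected hderiv ?_ hmem ?_ hmem
  · intro n y hy
    have hy' : |y| ≤ r := (abs_lt.mpr ⟨hy.1, hy.2⟩).le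
    simp only [Real.norm_eq_abs, abs_mul, abs_pow, ← pow_mul]
    calc |myc n| * |y| ^ (2 * n) ≤ 1 * r ^ (2 * n) :=
          mul_le_mul (abs_myc_le_one n) (pow_le_pow_left₀ (abs_nonneg y) hy' _)
            (by positivity) zero_le_one
      _ = r ^ (2 * n) := one_mul _
  · apply Summable.of_norm_bounded (summable_geometric_of_lt_one
      (by positivity : (0:ℝ) ≤ r ^ 2) (by nlinarith))
    intro n
    simp only [Real.norm_eq_abs, abs_mul, abs_pow, ← pow_mul]
    calc |mya n| * |t| ^ (2 * n + 1) ≤ 1 * r ^ (2 * n) := by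
          apply mul_le_mul (abs_mya_le_one n) _ (by positivity) zero_le_one
          calc |t| ^ (2 * n + 1) ≤ r ^ (2 * n + 1) := pow_le_pow_left₀ (abs_nonneg t) htr.le _
            _ ≤ r ^ (2 * n) := by
                apply pow_le_pow_of_le_one (by positivity) hr1.le
                omega
      _ = r ^ (2 * n) := one_mul _

lemma myH_zero : myH 0 = 0 := by
  unfold myH
  rw [show (fun n : ℕ => mya n * (0:ℝ) ^ (2 * n + 1)) = fun _ => 0 by
    funext n; simp]
  exact tsum_zero

lemma myH_eq {t : ℝ} (h0 : 0 ≤ t) (h1 : t < 1) : myH t = Real.arcsin t := by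
  have key : ∀ y ∈ Set.Icc (0:ℝ) t, myH y - Real.arcsin y = myH 0 - Real.arcsin 0 := by
    apply constant_of_has_deriv_right_zero
    · intro y hy
      have hy' : y ∈ Set.Ioo (-1:ℝ) 1 := ⟨by linarith [hy.1], by linarith [hy.2]⟩
      have hd := (hasDerivAt_myH hy').sub
        (Real.hasDerivAt_arcsin (by linarith [hy'.1]) (by linarith [hy'.2]))
      exact hd.continuousAt.continuousWithinAt
    · intro y hy
      have hy' : y ∈ Set.Ioo (-1:ℝ) 1 := ⟨by linarith [hy.1], by linarith [hy.2]⟩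
      have hd := (hasDerivAt_myH hy').sub
        (Real.hasDerivAt_arcsin (by linarith [hy'.1]) (by linarith [hy'.2]))
      have hy2 : y ^ 2 < 1 := by nlinarith [hy'.1, hy'.2]
      have hzero : (∑' n, myc n * y ^ (2 * n)) - 1 / Real.sqrt (1 - y ^ 2) = 0 := by
        have h1 : (∑' n, myc n * y ^ (2 * n)) = myf (y ^ 2) := by
          unfold myf
          apply tsum_congr
          intro n
          rw [pow_mul]
        have h2 := myf_eq (sq_nonneg y) hy2
        have hs : (0:ℝ) < Real.sqrt (1 - y ^ 2) := Real.sqrt_pos.mpr (by linarith)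
        rw [h1]
        field_simp
        linarith [h2]
      rw [← hzero]
      exact hd.hasDerivWithinAt
  have := key t ⟨h0, le_refl t⟩
  rw [myH_zero, Real.arcsin_zero] at this
  linarith [this]


lemma tsum_mya : (∑' n, mya n) = Real.pi / 2 := by
  have hL : HasSum mya (∑' n, mya n) := mya_summable.hasSum
  have habel := Real.tendsto_tsum_powerSeries_nhdsWithin_lt hL.tendsto_sum_nat
  have heq : ∀ᶠ x in nhdsWithin (1:ℝ) (Set.Iio 1),
      (∑' n, mya n * x ^ n) = Real.arcsin (Real.sqrt x) / Real.sqrt x := by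
    filter_upwards [Ioo_mem_nhdsLT_of_mem (show (1:ℝ) ∈ Set.Ioc 0 1 by norm_num)] with x hx
    have hx0 : 0 < x := hx.1
    have hx1 : x < 1 := hx.2
    have ht0 : 0 < Real.sqrt x := Real.sqrt_pos.mpr hx0
    have htx : Real.sqrt x ^ 2 = x := Real.sq_sqrt hx0.le
    have ht1 : Real.sqrt x < 1 := by nlinarith [Real.sqrt_nonneg x]
    have hH := myH_eq ht0.le ht1
    have hexp : myH (Real.sqrt x) = Real.sqrt x * ∑' n, mya n * x ^ n := by
      unfold myH
      rw [← tsum_mul_left]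
      apply tsum_congr
      intro n
      rw [pow_succ, pow_mul, htx]
      ring
    rw [eq_div_iff ht0.ne']
    rw [hexp] at hH
    linarith [hH]
  have hlim2 : Filter.Tendsto (fun x => Real.arcsin (Real.sqrt x) / Real.sqrt x)
      (nhdsWithin (1:ℝ) (Set.Iio 1)) (nhds (Real.pi / 2)) := by
    have h1 : Filter.Tendsto Real.sqrt (nhdsWithin (1:ℝ) (Set.Iio 1)) (nhds 1) := by
      have := (Real.continuous_sqrt.tendsto 1).mono_left (nhdsWithin_le_nhds (s := Set.Iio 1))
      simpa [Real.sqrt_one] using this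
    have h2 : Filter.Tendsto (fun x => Real.arcsin (Real.sqrt x))
        (nhdsWithin (1:ℝ) (Set.Iio 1)) (nhds (Real.pi / 2)) := by
      have := (Real.continuous_arcsin.tendsto 1).comp h1
      simpa [Real.arcsin_one, Function.comp_def] using this
    have := h2.div h1 one_ne_zero
    simpa [Pi.div_def] using this
  exact tendsto_nhds_unique (habel.congr' heq) hlim2

theorem stmt_0 :
    HasSum (fun n : ℕ =>
      ((2 * n).factorial : ℝ) / (2 ^ (2 * n) * (2 * n + 1) * (n.factorial) ^ 2))
      (Real.pi / 2) := by
  have h := mya_summable.hasSum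
  rw [tsum_mya] at h
  convert h using 1
  funext n
  unfold mya myc
  have hcb : (n.centralBinom : ℝ) * (n.factorial : ℝ) * (n.factorial : ℝ) = (2 * n).factorial := by
    have := Nat.choose_mul_factorial_mul_factorial (show n ≤ 2 * n by omega)
    rw [show 2 * n - n = n by omega] at this
    rw [Nat.centralBinom]
    exact_mod_cast congrArg (Nat.cast : ℕ → ℝ) this
  have h4 : (2:ℝ) ^ (2 * n) = 4 ^ n := by
    rw [pow_mul]; norm_num
  rw [h4]
  have hpos1 : (0:ℝ) < 4 ^ n := by positivity
  have hpos2 : (0:ℝ) < 2 * (n:ℝ) + 1 := by positivity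
  have hfpos : (0:ℝ) < (n.factorial : ℝ) := by exact_mod_cast n.factorial_pos
  rw [div_div, div_eq_div_iff (by positivity) (by positivity)]
  linear_combination (-(4:ℝ) ^ n * (2 * (n:ℝ) + 1)) * hcb
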